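/- Let n ≥ 2. The 𝒜_n^ℂ-valued function G_n(Z) = (N(Z)^{1/2})^{−(n+1)} Z⁺ on ℂ_G^{n+1} satisfies G_n = (1−n)^{−1} ∇_ℂ H_n where H_n(Z) = (N(Z)^{1/2})^{1−n}, and G_n is both complex left-monogenic and complex right-monogenic on ℂ_G^{n+1}: ∇⁺_ℂ G_n = 0 and G_n ∇⁺_ℂ = 0. -/

import Mathlib

open scoped BigOperators

/-- `N(Z) = ∑_{j=0}^n z_j²` on `ℂ^{n+1}`. -/
noncomputable def Ncomplex (n : ℕ) (Z : Fin (n + 1) → ℂ) : ℂ := ∑ j, Z j ^ 2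

/-- The domain `ℂ_G^{n+1} = ℂ^{n+1} ∖ {Z : N(Z) is real and ≤ 0}`. -/
def CG (n : ℕ) : Set (Fin (n + 1) → ℂ) :=
  {Z | ¬((Ncomplex n Z).im = 0 ∧ (Ncomplex n Z).re ≤ 0)}

/-- `H_n(Z) = (N(Z)^{1/2})^{1-n}`, with the branch of the square root having positive
real part (realized by the principal branch `Complex.cpow`). -/
noncomputable def Hfun (n : ℕ) (Z : Fin (n + 1) → ℂ) : ℂ :=
  (Ncomplex n Z ^ ((1 : ℂ) / 2)) ^ ((1 : ℤ) - (n : ℤ))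

/-- The `j`-th complex partial derivative of an `A`-valued function. -/
noncomputable def pdC {n : ℕ} {A : Type*} [NormedAddCommGroup A] [NormedSpace ℂ A]
    (f : (Fin (n + 1) → ℂ) → A) (j : Fin (n + 1)) (Z : Fin (n + 1) → ℂ) : A :=
  fderiv ℂ f Z (Pi.single j 1)

/-- The left Dirac operator `∇⁺_ℂ f = ∑_j e_j ∂f/∂z_j` (with `e 0 = 1`). -/
noncomputable def diracPlusLC {n : ℕ} {A : Type*} [NormedRing A] [NormedAlgebra ℂ A]
    (e : Fin (n + 1) → A) (f : (Fin (n + 1) → ℂ) → A) (Z : Fin (n + 1) → ℂ) : A :=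
  ∑ j, e j * pdC f j Z

/-- The left Dirac operator `∇_ℂ f = ∂f/∂z_0 - ∑_{j≥1} e_j ∂f/∂z_j`. -/
noncomputable def diracMinusLC {n : ℕ} {A : Type*} [NormedRing A] [NormedAlgebra ℂ A]
    (e : Fin (n + 1) → A) (f : (Fin (n + 1) → ℂ) → A) (Z : Fin (n + 1) → ℂ) : A :=
  pdC f 0 Z - ∑ j ∈ Finset.univ.filter (fun j : Fin (n + 1) => j ≠ 0), e j * pdC f j Z

/-- The right Dirac operator `f∇⁺_ℂ = ∑_j (∂f/∂z_j) e_j` (with `e 0 = 1`). -/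
noncomputable def diracPlusRC {n : ℕ} {A : Type*} [NormedRing A] [NormedAlgebra ℂ A]
    (e : Fin (n + 1) → A) (f : (Fin (n + 1) → ℂ) → A) (Z : Fin (n + 1) → ℂ) : A :=
  ∑ j, pdC f j Z * e j

/-- `Z⁺ = z_0 e_0 - ∑_{j=1}^n z_j e_j` as an element of the Clifford algebra. -/
noncomputable def Zplus {n : ℕ} {A : Type*} [NormedRing A] [NormedAlgebra ℂ A]
    (e : Fin (n + 1) → A) (Z : Fin (n + 1) → ℂ) : A :=
  ∑ j, (if j = 0 then Z j else -Z j) • e j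

/-- `G_n(Z) = (N(Z)^{1/2})^{-(n+1)} Z⁺`. -/
noncomputable def Gfun {n : ℕ} {A : Type*} [NormedRing A] [NormedAlgebra ℂ A]
    (e : Fin (n + 1) → A) (Z : Fin (n + 1) → ℂ) : A :=
  ((Ncomplex n Z ^ ((1 : ℂ) / 2)) ^ (-((n : ℤ) + 1))) • Zplus e Z

open Finset

section Alg
variable {n : ℕ} {A : Type*} [NormedRing A] [NormedAlgebra ℂ A]

lemma sum_split {M : Type*} [AddCommMonoid M] (f : Fin (n + 1) → M) :
    ∑ j, f j = f 0 + ∑ j ∈ univ.filter (fun j : Fin (n + 1) => j ≠ 0), f j := by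
  have h : univ.filter (fun j : Fin (n + 1) => ¬ j = 0)
      = univ.filter (fun j : Fin (n + 1) => j ≠ 0) := rfl
  rw [← Finset.sum_filter_add_sum_filter_not univ (fun j : Fin (n + 1) => j = 0) f, ← h]
  congr 1
  rw [show univ.filter (fun j : Fin (n + 1) => j = 0) = {0} from by ext j; simp,
    Finset.sum_singleton]

lemma Vsq (e : Fin (n + 1) → A)
    (hsq : ∀ j : Fin (n + 1), j ≠ 0 → e j * e j = -1)
    (hanti : ∀ j k : Fin (n + 1), j ≠ 0 → k ≠ 0 → j ≠ k → e j * e k = -(e k * e j))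
    (Z : Fin (n + 1) → ℂ) :
    (∑ j ∈ univ.filter (fun j : Fin (n + 1) => j ≠ 0), Z j • e j) *
      (∑ j ∈ univ.filter (fun j : Fin (n + 1) => j ≠ 0), Z j • e j) =
      (-(∑ j ∈ univ.filter (fun j : Fin (n + 1) => j ≠ 0), Z j ^ 2)) • 1 := by
  classical
  set s := univ.filter (fun j : Fin (n + 1) => j ≠ 0) with hs
  have hmem : ∀ j, j ∈ s ↔ j ≠ 0 := by intro j; simp [hs]
  rw [Finset.sum_mul_sum]
  have h1 : ∀ j ∈ s, ∑ k ∈ s, (Z j • e j) * (Z k • e k)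
      = ∑ k ∈ s, (Z j * Z k) • (e j * e k) := by
    intro j _
    refine Finset.sum_congr rfl fun k _ => ?_
    rw [smul_mul_smul_comm]
  rw [Finset.sum_congr rfl h1, ← Finset.sum_product']
  have hsplit : s ×ˢ s = s.diag ∪ s.offDiag := (Finset.diag_union_offDiag s).symm
  rw [hsplit, Finset.sum_union (Finset.disjoint_diag_offDiag s)]
  have hoff : ∑ p ∈ s.offDiag, (Z p.1 * Z p.2) • (e p.1 * e p.2) = 0 := by
    refine Finset.sum_involution (fun p _ => Prod.swap p) ?_ ?_ ?_ ?_
    · intro p hp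
      rw [Finset.mem_offDiag] at hp
      have h12 : e p.1 * e p.2 = -(e p.2 * e p.1) :=
        hanti p.1 p.2 ((hmem p.1).1 hp.1) ((hmem p.2).1 hp.2.1) hp.2.2
      simp only [Prod.fst_swap, Prod.snd_swap, h12, smul_neg]
      rw [mul_comm (Z p.2) (Z p.1)]
      exact neg_add_cancel _
    · intro p hp _
      rw [Finset.mem_offDiag] at hp
      intro hcontra
      exact hp.2.2 (congrArg Prod.snd hcontra)
    · intro p hp
      rw [Finset.mem_offDiag] at hp ⊢
      exact ⟨hp.2.1, hp.1, fun h => hp.2.2 h.symm⟩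
    · intro p _; rfl
  rw [hoff, add_zero, Finset.sum_diag]
  have h2 : ∀ j ∈ s, (Z j * Z j) • (e j * e j) = -((Z j ^ 2) • (1 : A)) := by
    intro j hj
    rw [hsq j ((hmem j).1 hj), ← sq, smul_neg]
  rw [Finset.sum_congr rfl h2, Finset.sum_neg_distrib, ← Finset.sum_smul, neg_smul]


lemma Zplus_eq (e : Fin (n + 1) → A) (he0 : e 0 = 1) (Z : Fin (n + 1) → ℂ) :
    Zplus e Z = Z 0 • (1 : A) -
      ∑ j ∈ univ.filter (fun j : Fin (n + 1) => j ≠ 0), Z j • e j := by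
  unfold Zplus
  rw [sum_split (fun j => (if j = 0 then Z j else -Z j) • e j), if_pos rfl, he0,
    sub_eq_add_neg]
  congr 1
  rw [← Finset.sum_neg_distrib]
  refine Finset.sum_congr rfl fun j hj => ?_
  rw [Finset.mem_filter] at hj
  rw [if_neg hj.2, neg_smul]

lemma ZmZp (e : Fin (n + 1) → A) (he0 : e 0 = 1)
    (hsq : ∀ j : Fin (n + 1), j ≠ 0 → e j * e j = -1)
    (hanti : ∀ j k : Fin (n + 1), j ≠ 0 → k ≠ 0 → j ≠ k → e j * e k = -(e k * e j))
    (Z : Fin (n + 1) → ℂ) :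
    (∑ j, Z j • e j) * Zplus e Z = Ncomplex n Z • 1 ∧
      Zplus e Z * (∑ j, Z j • e j) = Ncomplex n Z • 1 := by
  classical
  set s := univ.filter (fun j : Fin (n + 1) => j ≠ 0) with hs
  set V : A := ∑ j ∈ s, Z j • e j with hV
  have hZm : (∑ j, Z j • e j) = Z 0 • 1 + V := by
    rw [sum_split (fun j => Z j • e j), he0]
  have hZp : Zplus e Z = Z 0 • 1 - V := Zplus_eq e he0 Z
  have hVV : V * V = (-(∑ j ∈ s, Z j ^ 2)) • 1 := Vsq e hsq hanti Z
  have hN : Ncomplex n Z = Z 0 ^ 2 + ∑ j ∈ s, Z j ^ 2 := by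
    unfold Ncomplex
    rw [sum_split (fun j => Z j ^ 2)]
  constructor
  · rw [hZm, hZp, add_mul, mul_sub, mul_sub, hVV, hN]
    simp only [smul_mul_assoc, one_mul, mul_smul_comm, mul_one]
    rw [smul_smul, ← sq]
    module
  · rw [hZm, hZp, sub_mul, mul_add, mul_add, hVV, hN]
    simp only [smul_mul_assoc, one_mul, mul_smul_comm, mul_one]
    rw [smul_smul, ← sq]
    module

end Alg
open Finset

section Anal
variable {n : ℕ}

/-- The continuous linear map `v ↦ ∑ j, Z j * v j`. -/
noncomputable def LZclm (n : ℕ) (Z : Fin (n + 1) → ℂ) : (Fin (n + 1) → ℂ) →L[ℂ] ℂ :=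
  ∑ j, Z j • ContinuousLinearMap.proj j

lemma LZclm_apply_single (Z : Fin (n + 1) → ℂ) (j : Fin (n + 1)) :
    LZclm n Z (Pi.single j 1) = Z j := by
  classical
  simp only [LZclm, ContinuousLinearMap.sum_apply, ContinuousLinearMap.smul_apply,
    ContinuousLinearMap.proj_apply, Pi.single_apply, smul_eq_mul, mul_ite, mul_one, mul_zero]
  rw [Finset.sum_ite_eq' univ j (fun k => Z k)]
  simp

lemma hasFDerivAt_Ncomplex (Z : Fin (n + 1) → ℂ) :
    HasFDerivAt (Ncomplex n) ((2 : ℂ) • LZclm n Z) Z := by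
  have h : ∀ j ∈ (univ : Finset (Fin (n + 1))),
      HasFDerivAt (fun W : Fin (n + 1) → ℂ => W j ^ 2)
        ((((2 : ℕ) : ℂ) * Z j ^ (2 - 1)) • (ContinuousLinearMap.proj j :
          (Fin (n + 1) → ℂ) →L[ℂ] ℂ)) Z := by
    intro j _
    have hproj : HasFDerivAt (fun W : Fin (n + 1) → ℂ => W j)
        (ContinuousLinearMap.proj j : (Fin (n + 1) → ℂ) →L[ℂ] ℂ) Z :=
      (ContinuousLinearMap.proj j : (Fin (n + 1) → ℂ) →L[ℂ] ℂ).hasFDerivAt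
    exact (hasDerivAt_pow 2 (Z j)).comp_hasFDerivAt Z hproj
  have := HasFDerivAt.fun_sum h
  refine this.congr_fderiv ?_
  symm
  rw [LZclm, Finset.smul_sum]
  refine Finset.sum_congr rfl fun j _ => ?_
  rw [smul_smul]
  norm_num

lemma hasFDerivAt_gm (m : ℤ) (Z : Fin (n + 1) → ℂ)
    (hZ : Ncomplex n Z ∈ Complex.slitPlane) :
    HasFDerivAt (fun W => (Ncomplex n W ^ ((1 : ℂ) / 2)) ^ m)
      (((m : ℂ) * (Ncomplex n Z ^ ((1 : ℂ) / 2)) ^ (m - 2)) • LZclm n Z) Z := by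
  set N := Ncomplex n Z with hNdef
  set g := N ^ ((1 : ℂ) / 2) with hgdef
  have hN0 : N ≠ 0 := Complex.slitPlane_ne_zero hZ
  have hg0 : g ≠ 0 := by
    rw [hgdef, Ne, Complex.cpow_eq_zero_iff]
    intro h; exact hN0 h.1
  have h1 : HasFDerivAt (fun W => Ncomplex n W ^ ((1 : ℂ) / 2))
      ((((1 : ℂ) / 2) * N ^ ((1 : ℂ) / 2 - 1)) • ((2 : ℂ) • LZclm n Z)) Z := by
    have h1' := (Complex.hasStrictDerivAt_cpow_const (c := (1 : ℂ) / 2) hZ).hasDerivAt.comp_hasFDerivAt Z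
      (hasFDerivAt_Ncomplex Z)
    exact h1'
  have h2 : HasDerivAt (fun w : ℂ => w ^ m) ((m : ℂ) * g ^ (m - 1)) g :=
    hasDerivAt_zpow m g (Or.inl hg0)
  have h3 := h2.comp_hasFDerivAt Z h1
  refine h3.congr_fderiv ?_
  symm
  rw [smul_smul, smul_smul]
  congr 1
  have hhalf : ((1 : ℂ) / 2 - 1) = -(1 / 2) := by norm_num
  rw [hhalf, Complex.cpow_neg, ← hgdef]
  have hzz : g ^ (m - 2) = g ^ (m - 1) * g⁻¹ := by
    rw [show m - 2 = m - 1 - 1 by ring, zpow_sub_one₀ hg0]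
  rw [hzz]; ring

end Anal
/-- for `n ≥ 2`, `G_n = (1-n)⁻¹ ∇_ℂ H_n` on `ℂ_G^{n+1}`, and `G_n` is both
complex left-monogenic and complex right-monogenic there: `∇⁺_ℂ G_n = 0` and
`G_n ∇⁺_ℂ = 0`. -/
theorem Gfun_eq_grad_Hfun_and_monogenic {A : Type*} [NormedRing A] [NormedAlgebra ℂ A]
    (n : ℕ) (hn : 2 ≤ n)
    (e : Fin (n + 1) → A) (he0 : e 0 = 1)
    (hsq : ∀ j : Fin (n + 1), j ≠ 0 → e j * e j = -1)
    (hanti : ∀ j k : Fin (n + 1), j ≠ 0 → k ≠ 0 → j ≠ k → e j * e k = -(e k * e j)) :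
    ∀ Z ∈ CG n,
      Gfun e Z = ((1 : ℂ) - (n : ℂ))⁻¹ • diracMinusLC e (fun W => Hfun n W • (1 : A)) Z ∧
      diracPlusLC e (Gfun e) Z = 0 ∧
      diracPlusRC e (Gfun e) Z = 0 := by
  classical
  intro Z hZ
  have hslit : Ncomplex n Z ∈ Complex.slitPlane := by
    rw [Complex.mem_slitPlane_iff]
    by_contra h
    push_neg at h
    exact hZ ⟨h.2, h.1⟩
  set N := Ncomplex n Z with hNdef
  set g := N ^ ((1 : ℂ) / 2) with hgdef
  have hN0 : N ≠ 0 := Complex.slitPlane_ne_zero hslit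
  have hg0 : g ≠ 0 := by
    rw [hgdef, Ne, Complex.cpow_eq_zero_iff]
    intro h; exact hN0 h.1
  have hg2 : g ^ (2 : ℕ) = N := by
    rw [hgdef, show (1 : ℂ) / 2 = ((2 : ℕ) : ℂ)⁻¹ by norm_num]
    exact Complex.cpow_nat_inv_pow N two_ne_zero
  obtain ⟨hmul₁, hmul₂⟩ := ZmZp e he0 hsq hanti Z
  -- the linear part as a continuous linear map
  set B : (Fin (n + 1) → ℂ) →L[ℂ] A :=
    ∑ k, (if k = 0 then (1 : ℂ) else -1) •
      ((ContinuousLinearMap.proj k : (Fin (n + 1) → ℂ) →L[ℂ] ℂ).smulRight (e k)) with hBdef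
  have hBapp : ∀ W, B W = Zplus e W := by
    intro W
    rw [hBdef]
    unfold Zplus
    simp only [ContinuousLinearMap.sum_apply, ContinuousLinearMap.smul_apply,
      ContinuousLinearMap.smulRight_apply, ContinuousLinearMap.proj_apply]
    refine Finset.sum_congr rfl fun k _ => ?_
    by_cases hk : k = 0
    · simp [hk]
    · simp only [hk, if_false, smul_smul, neg_one_mul, neg_smul]
  have hBsingle : ∀ j, B (Pi.single j 1) = (if j = 0 then (1 : ℂ) else -1) • e j := by
    intro j
    rw [hBdef]
    simp only [ContinuousLinearMap.sum_apply, ContinuousLinearMap.smul_apply,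
      ContinuousLinearMap.smulRight_apply, ContinuousLinearMap.proj_apply]
    rw [Finset.sum_eq_single j]
    · simp
    · intro k _ hkj
      rw [Pi.single_apply, if_neg hkj]
      simp
    · intro h; exact absurd (Finset.mem_univ j) h
  have hB : HasFDerivAt (Zplus e) B Z := by
    have hfun : Zplus e = fun W => B W := by funext W; exact (hBapp W).symm
    rw [hfun]; exact B.hasFDerivAt
  -- Part 1 : the gradient formula
  have hne : (1 : ℂ) - (n : ℂ) ≠ 0 := by
    rw [sub_ne_zero]
    intro h
    have : n = 1 := by exact_mod_cast h.symm
    omega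
  set m1 : ℤ := 1 - (n : ℤ) with hm1
  have hH : HasFDerivAt (fun W => Hfun n W • (1 : A))
      ((((m1 : ℂ) * g ^ (m1 - 2)) • LZclm n Z).smulRight (1 : A)) Z :=
    (hasFDerivAt_gm m1 Z hslit).smul_const (1 : A)
  have hpdH : ∀ j, pdC (fun W => Hfun n W • (1 : A)) j Z
      = (((m1 : ℂ) * g ^ (m1 - 2)) * Z j) • (1 : A) := by
    intro j
    unfold pdC
    rw [hH.fderiv]
    rw [ContinuousLinearMap.smulRight_apply, ContinuousLinearMap.smul_apply,
      LZclm_apply_single, smul_eq_mul]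
  set c : ℂ := (m1 : ℂ) * g ^ (m1 - 2) with hc
  have hZp : Zplus e Z = Z 0 • (1 : A) -
      ∑ j ∈ Finset.univ.filter (fun j : Fin (n + 1) => j ≠ 0), Z j • e j :=
    Zplus_eq e he0 Z
  have hgrad : Gfun e Z
      = ((1 : ℂ) - (n : ℂ))⁻¹ • diracMinusLC e (fun W => Hfun n W • (1 : A)) Z := by
    unfold diracMinusLC
    rw [hpdH 0]
    have hsum : ∑ j ∈ Finset.univ.filter (fun j : Fin (n + 1) => j ≠ 0),
        e j * pdC (fun W => Hfun n W • (1 : A)) j Z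
        = c • ∑ j ∈ Finset.univ.filter (fun j : Fin (n + 1) => j ≠ 0), Z j • e j := by
      rw [Finset.smul_sum]
      refine Finset.sum_congr rfl fun j _ => ?_
      rw [hpdH j, mul_smul_comm, mul_one, mul_smul]
    rw [hsum, mul_smul]
    rw [← smul_sub, smul_smul]
    have hcval : ((1 : ℂ) - (n : ℂ))⁻¹ * c = g ^ (-((n : ℤ) + 1)) := by
      rw [hc, hm1]
      have h1 : ((1 - (n : ℤ) : ℤ) : ℂ) = 1 - (n : ℂ) := by push_cast; ring
      have h2 : (1 - (n : ℤ)) - 2 = -((n : ℤ) + 1) := by ring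
      rw [h1, h2, ← mul_assoc, inv_mul_cancel₀ hne, one_mul]
    rw [hcval, ← hZp]
    rfl
  set m : ℤ := -((n : ℤ) + 1) with hm
  have hGder : HasFDerivAt (Gfun e)
      ((g ^ m) • B + (((m : ℂ) * g ^ (m - 2)) • LZclm n Z).smulRight (Zplus e Z)) Z :=
    (hasFDerivAt_gm m Z hslit).smul hB
  have hpdG : ∀ j, pdC (Gfun e) j Z
      = (g ^ m * (if j = 0 then (1 : ℂ) else -1)) • e j
        + (((m : ℂ) * g ^ (m - 2)) * Z j) • Zplus e Z := by
    intro j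
    unfold pdC
    rw [hGder.fderiv]
    rw [ContinuousLinearMap.add_apply, ContinuousLinearMap.smul_apply,
      ContinuousLinearMap.smulRight_apply, ContinuousLinearMap.smul_apply,
      LZclm_apply_single, hBsingle j, smul_smul, smul_eq_mul]
  have hscal : ((n : ℂ) + 1) * g ^ m + ((m : ℂ) * g ^ (m - 2)) * N = 0 := by
    rw [← hg2, ← zpow_natCast g 2, mul_assoc, ← zpow_add₀ hg0,
      show m - 2 + ((2 : ℕ) : ℤ) = m by push_cast; ring, hm]
    push_cast
    ring
  have hcard : ∑ _j : Fin (n + 1), (g ^ m) • (1 : A) = ((n : ℂ) + 1) • ((g ^ m) • (1 : A)) := by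
    rw [Finset.sum_const, Finset.card_univ, Fintype.card_fin,
      ← Nat.cast_smul_eq_nsmul ℂ (n + 1)]
    push_cast
    ring_nf
  refine ⟨hgrad, ?_, ?_⟩
  · -- left monogenic
    unfold diracPlusLC
    have hterm : ∀ j : Fin (n + 1), e j * pdC (Gfun e) j Z
        = (g ^ m) • (1 : A) + (((m : ℂ) * g ^ (m - 2)) * Z j) • (e j * Zplus e Z) := by
      intro j
      rw [hpdG j, mul_add, mul_smul_comm, mul_smul_comm]
      congr 1
      by_cases hj : j = 0
      · subst hj; simp [he0]
      · rw [if_neg hj, hsq j hj]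
        simp [smul_neg, mul_neg]
    calc ∑ j, e j * pdC (Gfun e) j Z
        = ∑ j : Fin (n + 1), ((g ^ m) • (1 : A)
            + (((m : ℂ) * g ^ (m - 2)) * Z j) • (e j * Zplus e Z)) :=
          Finset.sum_congr rfl fun j _ => hterm j
      _ = ((n : ℂ) + 1) • ((g ^ m) • (1 : A))
            + ((m : ℂ) * g ^ (m - 2)) • ((∑ j, Z j • e j) * Zplus e Z) := by
          rw [Finset.sum_add_distrib, hcard]
          congr 1
          rw [Finset.sum_mul, Finset.smul_sum]
          refine Finset.sum_congr rfl fun j _ => ?_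
          rw [smul_mul_assoc, mul_smul]
      _ = 0 := by
          rw [hmul₁, smul_smul, smul_smul, ← add_smul, hscal, zero_smul]
  · -- right monogenic
    unfold diracPlusRC
    have hterm : ∀ j : Fin (n + 1), pdC (Gfun e) j Z * e j
        = (g ^ m) • (1 : A) + (((m : ℂ) * g ^ (m - 2)) * Z j) • (Zplus e Z * e j) := by
      intro j
      rw [hpdG j, add_mul, smul_mul_assoc, smul_mul_assoc]
      congr 1
      by_cases hj : j = 0
      · subst hj; simp [he0]
      · rw [if_neg hj, hsq j hj]
        simp [smul_neg, mul_neg]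
    calc ∑ j, pdC (Gfun e) j Z * e j
        = ∑ j : Fin (n + 1), ((g ^ m) • (1 : A)
            + (((m : ℂ) * g ^ (m - 2)) * Z j) • (Zplus e Z * e j)) :=
          Finset.sum_congr rfl fun j _ => hterm j
      _ = ((n : ℂ) + 1) • ((g ^ m) • (1 : A))
            + ((m : ℂ) * g ^ (m - 2)) • (Zplus e Z * (∑ j, Z j • e j)) := by
          rw [Finset.sum_add_distrib, hcard]
          congr 1
          rw [Finset.mul_sum, Finset.smul_sum]
          refine Finset.sum_congr rfl fun j _ => ?_
          rw [mul_smul_comm, mul_smul]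
      _ = 0 := by
          rw [hmul₂, smul_smul, smul_smul, ← add_smul, hscal, zero_smul]
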